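/- Let R be a ring with a ℤ-grading 𝒜. The following are equivalent: (1) R is strongly ℤ-graded, i.e. 𝒜 i * 𝒜 j = 𝒜 (i+j) for all i, j ∈ ℤ; (2) for every k ∈ ℤ there is a partition of unity of type (k, −k), i.e. (1 : R) ∈ 𝒜 k * 𝒜 (−k); (3) (1 : R) ∈ 𝒜 1 * 𝒜 (−1) and (1 : R) ∈ 𝒜 (−1) * 𝒜 1. -/

import Mathlib

/-- A ℤ-graded ring is *strongly graded* if `𝒜 i * 𝒜 j = 𝒜 (i + j)` for all `i j`. -/
def IsStronglyGraded {R : Type*} [Ring R] (𝒜 : ℤ → Submodule ℤ R) : Prop :=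
  ∀ i j : ℤ, 𝒜 i * 𝒜 j = 𝒜 (i + j)

private lemma aux_graded_mul_le {R : Type*} [Ring R] (𝒜 : ℤ → Submodule ℤ R) [GradedRing 𝒜]
    (i j : ℤ) : 𝒜 i * 𝒜 j ≤ 𝒜 (i + j) :=
  Submodule.mul_le.2 fun _ hx _ hy => SetLike.mul_mem_graded hx hy

private lemma aux_le_mul_left {R : Type*} [Ring R] {S T : Submodule ℤ R} (h : (1 : R) ∈ S) :
    T ≤ S * T := fun x hx => by
  simpa using Submodule.mul_mem_mul h hx

private lemma aux_le_mul_right {R : Type*} [Ring R] {S T : Submodule ℤ R} (h : (1 : R) ∈ S) :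
    T ≤ T * S := fun x hx => by
  simpa using Submodule.mul_mem_mul hx h

private lemma aux_compose {R : Type*} [Ring R] (𝒜 : ℤ → Submodule ℤ R) [GradedRing 𝒜]
    {a b : ℤ} (ha : (1 : R) ∈ 𝒜 a * 𝒜 (-a)) (hb : (1 : R) ∈ 𝒜 b * 𝒜 (-b)) :
    (1 : R) ∈ 𝒜 (a + b) * 𝒜 (-(a + b)) := by
  have h1 : 𝒜 a * 𝒜 (-a) ≤ 𝒜 a * ((𝒜 b * 𝒜 (-b)) * 𝒜 (-a)) :=
    mul_le_mul' le_rfl (aux_le_mul_left hb)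
  have h2 : 𝒜 a * ((𝒜 b * 𝒜 (-b)) * 𝒜 (-a)) = (𝒜 a * 𝒜 b) * (𝒜 (-b) * 𝒜 (-a)) := by
    rw [mul_assoc, mul_assoc]
  have h3 : (𝒜 a * 𝒜 b) * (𝒜 (-b) * 𝒜 (-a)) ≤ 𝒜 (a + b) * 𝒜 (-(a + b)) := by
    have := mul_le_mul' (aux_graded_mul_le 𝒜 a b) (aux_graded_mul_le 𝒜 (-b) (-a))
    simpa [neg_add, add_comm] using this
  exact h3 (h2 ▸ h1 (ha))

/-- Characterisation of strongly graded rings: the following are equivalent: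
(1) `R` is strongly ℤ-graded;
(2) for every `k` there is a partition of unity of type `(k, -k)`, i.e. `1 ∈ 𝒜 k * 𝒜 (-k)`;
(3) there is a partition of unity of type `(1,-1)` and one of type `(-1,1)`. -/
theorem strongly_graded_tfae {R : Type*} [Ring R] (𝒜 : ℤ → Submodule ℤ R) [GradedRing 𝒜] :
    List.TFAE
      [IsStronglyGraded 𝒜,
       ∀ k : ℤ, (1 : R) ∈ 𝒜 k * 𝒜 (-k),
       (1 : R) ∈ 𝒜 1 * 𝒜 (-1) ∧ (1 : R) ∈ 𝒜 (-1) * 𝒜 1] := by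
  tfae_have 1 → 2 := by
    intro h k
    rw [h k (-k), add_neg_cancel]
    exact SetLike.one_mem_graded 𝒜
  tfae_have 2 → 3 := by
    intro h
    exact ⟨h 1, by simpa using h (-1)⟩
  tfae_have 3 → 2 := by
    rintro ⟨h1, h2⟩ k
    induction k using Int.induction_on with
    | zero =>
      have : (1 : R) ∈ 𝒜 0 * 𝒜 (-0) := by
        simpa using Submodule.mul_mem_mul (SetLike.one_mem_graded 𝒜) (SetLike.one_mem_graded 𝒜)
      exact this
    | succ n ih => simpa [add_comm] using aux_compose 𝒜 ih h1
    | pred n ih =>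
      have := aux_compose 𝒜 (b := -1) ih (by simpa using h2)
      simpa [sub_eq_add_neg, neg_add] using this
  tfae_have 2 → 1 := by
    intro h i j
    refine le_antisymm (aux_graded_mul_le 𝒜 i j) ?_
    have h1 : 𝒜 (i + j) ≤ 𝒜 (i + j) * (𝒜 (-j) * 𝒜 j) := aux_le_mul_right (by simpa using h (-j))
    have h2 : 𝒜 (i + j) * (𝒜 (-j) * 𝒜 j) = (𝒜 (i + j) * 𝒜 (-j)) * 𝒜 j := (mul_assoc _ _ _).symm
    have h3 : (𝒜 (i + j) * 𝒜 (-j)) * 𝒜 j ≤ 𝒜 i * 𝒜 j := by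
      refine mul_le_mul' ?_ le_rfl
      simpa using aux_graded_mul_le 𝒜 (i + j) (-j)
    exact fun x hx => h3 (h2 ▸ h1 hx)
  tfae_finish
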